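/- For every real number β > 1, the set { x ∈ [0,1) : r̂_β(x) = 0 } has full Lebesgue measure in [0,1), i.e. its complement in [0,1) has Lebesgue measure zero. -/

import Mathlib

open Set Filter MeasureTheory
open scoped ENNReal

/-- The β-transformation `x ↦ βx mod 1`. -/
noncomputable def Tbeta (β : ℝ) (x : ℝ) : ℝ := β * x - ⌊β * x⌋

/-- The asymptotic recurrence exponent
`r_β(x) = sup {r ∈ [0,∞] : |T_β^n x - x| < β^{-rn} for infinitely many n}`. -/
noncomputable def rBeta (β : ℝ) (x : ℝ) : ℝ≥0∞ :=
  ⨆ r ∈ {r : ℝ | 0 ≤ r ∧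
      ∃ᶠ n : ℕ in atTop, |(Tbeta β)^[n] x - x| < β ^ (-(r * (n : ℝ)))},
    ENNReal.ofReal r

/-- The uniform recurrence exponent
`r̂_β(x) = sup {r̂ ∈ [0,∞] : ∀ N ≫ 1, ∃ 1 ≤ n ≤ N, |T_β^n x - x| < β^{-r̂N}}`. -/
noncomputable def rHatBeta (β : ℝ) (x : ℝ) : ℝ≥0∞ :=
  ⨆ r ∈ {r : ℝ | 0 ≤ r ∧
      ∀ᶠ N : ℕ in atTop, ∃ n : ℕ, 1 ≤ n ∧ n ≤ N ∧
        |(Tbeta β)^[n] x - x| < β ^ (-(r * (N : ℝ)))},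
    ENNReal.ofReal r

lemma Tbeta_mem_Ico (β x : ℝ) : Tbeta β x ∈ Ico (0:ℝ) 1 := by
  have h : Tbeta β x = Int.fract (β * x) := rfl
  rw [h]
  exact ⟨Int.fract_nonneg _, Int.fract_lt_one _⟩

lemma Tbeta_iterate_mem_Ico (β x : ℝ) {n : ℕ} (hn : 1 ≤ n) :
    (Tbeta β)^[n] x ∈ Ico (0:ℝ) 1 := by
  obtain ⟨k, rfl⟩ := Nat.exists_eq_add_of_le hn
  rw [Nat.add_comm, Function.iterate_succ_apply']
  exact Tbeta_mem_Ico β _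

lemma sum_biUnion_le_double {α γ : Type*} [DecidableEq γ] (s : Finset α) (t : α → Finset γ)
    (g : γ → ℝ) (hg : ∀ a ∈ s, ∀ x ∈ t a, 0 ≤ g x) :
    ∑ x ∈ s.biUnion t, g x ≤ ∑ a ∈ s, ∑ x ∈ t a, g x := by
  classical
  induction s using Finset.induction_on with
  | empty => simp
  | @insert a s ha ih =>
    rw [Finset.biUnion_insert, Finset.sum_insert ha]
    have h1 : ∑ x ∈ t a ∪ s.biUnion t, g x ≤ ∑ x ∈ t a, g x + ∑ x ∈ s.biUnion t \ t a, g x := by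
      rw [← Finset.sum_union Finset.disjoint_sdiff]
      apply Finset.sum_le_sum_of_subset_of_nonneg
      · rw [Finset.union_sdiff_self_eq_union]
      · intro x hx hx2
        rcases Finset.mem_union.mp hx with h | h
        · exact hg a (Finset.mem_insert_self a s) x h
        · rcases Finset.mem_biUnion.mp (Finset.mem_sdiff.mp h).1 with ⟨b, hb, hxb⟩
          exact hg b (Finset.mem_insert_of_mem hb) x hxb
    have h2 : ∑ x ∈ s.biUnion t \ t a, g x ≤ ∑ x ∈ s.biUnion t, g x := by
      apply Finset.sum_le_sum_of_subset_of_nonneg (Finset.sdiff_subset)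
      intro x hx _
      rcases Finset.mem_biUnion.mp hx with ⟨b, hb, hxb⟩
      exact hg b (Finset.mem_insert_of_mem hb) x hxb
    have h3 := ih (fun b hb x hx => hg b (Finset.mem_insert_of_mem hb) x hx)
    linarith

lemma sum_image_le_real {α γ : Type*} [DecidableEq γ] (s : Finset α) (f : α → γ)
    (g : γ → ℝ) (hg : ∀ a ∈ s, 0 ≤ g (f a)) :
    ∑ x ∈ s.image f, g x ≤ ∑ a ∈ s, g (f a) := by
  classical
  induction s using Finset.induction_on with
  | empty => simp
  | @insert a s ha ih =>
    rw [Finset.image_insert, Finset.sum_insert ha]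
    by_cases h : f a ∈ s.image f
    · rw [Finset.insert_eq_self.mpr h]
      have := ih (fun b hb => hg b (Finset.mem_insert_of_mem hb))
      have := hg a (Finset.mem_insert_self a s)
      linarith
    · rw [Finset.sum_insert h]
      have := ih (fun b hb => hg b (Finset.mem_insert_of_mem hb))
      linarith

lemma cast_toNat_of_nonneg {a : ℤ} (h : 0 ≤ a) : ((a.toNat : ℕ) : ℝ) = (a : ℝ) := by
  rw [← Int.cast_natCast, Int.toNat_of_nonneg h]

lemma Tbeta_branches (β : ℝ) (hβ : 1 < β) (n : ℕ) :
    ∃ s : Finset (ℝ × ℝ),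
      (∀ x ∈ Ico (0:ℝ) 1, ∃ p ∈ s, x ∈ Ico p.1 p.2 ∧
        ∀ y ∈ Ico p.1 p.2, (Tbeta β)^[n] y = β ^ n * (y - p.1)) ∧
      (∀ p ∈ s, p.1 ≤ p.2) ∧
      (∑ p ∈ s, (p.2 - p.1) ≤ 1) ∧
      ((s.card : ℝ) ≤ ∑ j ∈ Finset.range (n+1), β ^ j) := by
  have hβ0 : (0:ℝ) < β := lt_trans one_pos hβ
  induction n with
  | zero =>
    refine ⟨{((0:ℝ),(1:ℝ))}, ?_, ?_, ?_, ?_⟩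
    · intro x hx
      exact ⟨((0:ℝ),(1:ℝ)), Finset.mem_singleton_self _, by simpa using hx,
        fun y _ => by simp⟩
    · intro p hp; rw [Finset.mem_singleton] at hp; rw [hp]; norm_num
    · simp
    · simp
  | succ n ih =>
    obtain ⟨s, hcov, hle, hsum, hcard⟩ := ih
    set b : ℝ := β ^ (n+1) with hbdef
    have hb0 : (0:ℝ) < b := pow_pos hβ0 _
    classical
    set M : ℝ × ℝ → ℕ := fun p => (⌈b * (p.2 - p.1)⌉).toNat with hM
    set F : ℝ × ℝ → ℕ → ℝ := fun p m => min (p.1 + (m:ℝ) / b) p.2 with hF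
    set f : ℝ × ℝ → ℕ → ℝ × ℝ := fun p m => (F p m, F p (m+1)) with hf
    have hfF : ∀ p m, (f p m).1 = F p m ∧ (f p m).2 = F p (m+1) := fun p m => ⟨rfl, rfl⟩
    have hFmono : ∀ (p : ℝ × ℝ) (m : ℕ), F p m ≤ F p (m+1) := by
      intro p m
      apply min_le_min _ le_rfl
      have h : (m:ℝ) / b ≤ ((m:ℕ)+1 : ℝ) / b := by
        gcongr
        linarith
      push_cast at h ⊢
      linarith
    have hMcast : ∀ p ∈ s, b * (p.2 - p.1) ≤ ((M p : ℕ) : ℝ) ∧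
        ((M p : ℕ) : ℝ) ≤ b * (p.2 - p.1) + 1 := by
      intro p hp
      have hlen : 0 ≤ p.2 - p.1 := by have := hle p hp; linarith
      have ht0 : 0 ≤ b * (p.2 - p.1) := mul_nonneg hb0.le hlen
      have hc0 : (0:ℤ) ≤ ⌈b * (p.2 - p.1)⌉ := Int.ceil_nonneg ht0
      have key : ((M p : ℕ) : ℝ) = ((⌈b * (p.2 - p.1)⌉ : ℤ) : ℝ) := by
        rw [hM]; exact cast_toNat_of_nonneg hc0
      constructor
      · rw [key]; exact Int.le_ceil _
      · rw [key]
        have := Int.ceil_lt_add_one (b * (p.2 - p.1))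
        linarith
    refine ⟨s.biUnion (fun p => (Finset.range (M p)).image (f p)), ?_, ?_, ?_, ?_⟩
    · -- covering with the affine formula
      intro x hx
      obtain ⟨p, hp, hxp, hform⟩ := hcov x hx
      obtain ⟨hlx, hxr⟩ := hxp
      have hbl0 : 0 ≤ b * (x - p.1) := mul_nonneg hb0.le (by linarith)
      set m : ℕ := (⌊b * (x - p.1)⌋).toNat with hm
      have keym : ((m : ℕ) : ℝ) = ((⌊b * (x - p.1)⌋ : ℤ) : ℝ) := by
        rw [hm]; exact cast_toNat_of_nonneg (Int.floor_nonneg.mpr hbl0)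
      have hmle : (m:ℝ) ≤ b * (x - p.1) := by
        rw [keym]; exact Int.floor_le _
      have hmlt : b * (x - p.1) < (m:ℝ) + 1 := by
        rw [keym]; exact Int.lt_floor_add_one _
      have hmM : m < M p := by
        have h1 : b * (x - p.1) < b * (p.2 - p.1) := by
          apply mul_lt_mul_of_pos_left _ hb0; linarith
        have h2 := (hMcast p hp).1
        have : (m:ℝ) < ((M p : ℕ) : ℝ) := lt_of_le_of_lt hmle (lt_of_lt_of_le h1 h2)
        exact_mod_cast this
      have hxm1 : p.1 + (m:ℝ)/b ≤ x := by
        have : (m:ℝ)/b ≤ x - p.1 := (div_le_iff₀ hb0).mpr (by rw [mul_comm] at hmle ⊢; linarith)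
        linarith
      have hxm2 : x < p.1 + ((m:ℝ)+1)/b := by
        have : x - p.1 < ((m:ℝ)+1)/b := (lt_div_iff₀ hb0).mpr (by rw [mul_comm] at hmlt ⊢; linarith)
        linarith
      have hfst : F p m = p.1 + (m:ℝ)/b := min_eq_left (le_of_lt (lt_of_le_of_lt hxm1 hxr))
      refine ⟨f p m, Finset.mem_biUnion.mpr ⟨p, hp,
        Finset.mem_image.mpr ⟨m, Finset.mem_range.mpr hmM, rfl⟩⟩, ?_, ?_⟩
      · constructor
        · show F p m ≤ x
          rw [hfst]; exact hxm1
        · show x < F p (m+1)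
          apply lt_min _ hxr
          push_cast
          exact hxm2
      · intro y hy
        obtain ⟨hy1₀, hy2₀⟩ := hy
        have hy1 : p.1 + (m:ℝ)/b ≤ y := by
          have h : F p m ≤ y := hy1₀
          rwa [hfst] at h
        have hy2' : y < min (p.1 + ((m:ℝ)+1)/b) p.2 := by
          have h : y < F p (m+1) := hy2₀
          have heq : F p (m+1) = min (p.1 + ((m:ℝ)+1)/b) p.2 := by
            rw [hF]; push_cast; ring_nf
          rwa [heq] at h
        have hyr : y < p.2 := lt_of_lt_of_le hy2' (min_le_right _ _)
        have hym : y < p.1 + ((m:ℝ)+1)/b := lt_of_lt_of_le hy2' (min_le_left _ _)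
        have hyl : p.1 ≤ y := by
          have h0 : 0 ≤ (m:ℝ)/b := div_nonneg (Nat.cast_nonneg m) hb0.le
          linarith
        have hTn : (Tbeta β)^[n] y = β ^ n * (y - p.1) := hform y ⟨hyl, hyr⟩
        have hlow : (m:ℝ) ≤ b * (y - p.1) := by
          rw [mul_comm, ← div_le_iff₀ hb0]
          linarith
        have hhigh : b * (y - p.1) < (m:ℝ) + 1 := by
          rw [mul_comm, ← lt_div_iff₀ hb0]
          linarith
        have hfloor : ⌊β * (β ^ n * (y - p.1))⌋ = (m : ℤ) := by
          have harg : β * (β ^ n * (y - p.1)) = b * (y - p.1) := by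
            rw [hbdef, pow_succ]; ring
          rw [harg]
          rw [Int.floor_eq_iff]
          constructor
          · exact_mod_cast hlow
          · push_cast; exact hhigh
        have hfst' : (f p m).1 = p.1 + (m:ℝ)/b := hfst
        rw [Function.iterate_succ_apply', hTn, hfst']
        show β * (β ^ n * (y - p.1)) - (⌊β * (β ^ n * (y - p.1))⌋ : ℝ)
          = β ^ (n+1) * (y - (p.1 + (m:ℝ)/b))
        rw [hfloor, hbdef, pow_succ]
        push_cast
        field_simp
        ring
    · -- monotone endpoints
      intro q hq
      obtain ⟨p, hp, hq2⟩ := Finset.mem_biUnion.mp hq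
      obtain ⟨m, _, rfl⟩ := Finset.mem_image.mp hq2
      exact hFmono p m
    · -- total length
      have h1 : ∑ q ∈ s.biUnion (fun p => (Finset.range (M p)).image (f p)), (q.2 - q.1)
          ≤ ∑ p ∈ s, ∑ q ∈ (Finset.range (M p)).image (f p), (q.2 - q.1) := by
        apply sum_biUnion_le_double
        intro p hp q hq
        obtain ⟨m, _, rfl⟩ := Finset.mem_image.mp hq
        have := hFmono p m
        show 0 ≤ F p (m+1) - F p m
        linarith
      have h2 : ∀ p ∈ s, ∑ q ∈ (Finset.range (M p)).image (f p), (q.2 - q.1)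
          ≤ p.2 - p.1 := by
        intro p hp
        have h3 : ∑ q ∈ (Finset.range (M p)).image (f p), (q.2 - q.1)
            ≤ ∑ m ∈ Finset.range (M p), ((f p m).2 - (f p m).1) := by
          apply sum_image_le_real
          intro m _
          have := hFmono p m
          show 0 ≤ F p (m+1) - F p m
          linarith
        have h4 : ∑ m ∈ Finset.range (M p), ((f p m).2 - (f p m).1)
            = F p (M p) - F p 0 := by
          have hterm : ∀ m : ℕ, (f p m).2 - (f p m).1 = F p (m+1) - F p m := fun m => rfl
          exact (Finset.sum_congr rfl (fun m _ => hterm m)).trans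
            (Finset.sum_range_sub (fun m => F p m) (M p))
        have h5 : F p 0 = p.1 := by
          rw [hF]; simp only [Nat.cast_zero, zero_div, add_zero]
          exact min_eq_left (hle p hp)
        have h6 : F p (M p) = p.2 := by
          apply min_eq_right
          have h7 := (hMcast p hp).1
          have h8 : p.2 - p.1 ≤ ((M p : ℕ):ℝ) / b := by
            rw [le_div_iff₀ hb0, mul_comm]; exact h7
          linarith
        calc ∑ q ∈ (Finset.range (M p)).image (f p), (q.2 - q.1)
            ≤ ∑ m ∈ Finset.range (M p), ((f p m).2 - (f p m).1) := h3
          _ = F p (M p) - F p 0 := h4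
          _ = p.2 - p.1 := by rw [h5, h6]
      calc ∑ q ∈ s.biUnion (fun p => (Finset.range (M p)).image (f p)), (q.2 - q.1)
          ≤ ∑ p ∈ s, ∑ q ∈ (Finset.range (M p)).image (f p), (q.2 - q.1) := h1
        _ ≤ ∑ p ∈ s, (p.2 - p.1) := Finset.sum_le_sum h2
        _ ≤ 1 := hsum
    · -- cardinality
      have h1 : (s.biUnion (fun p => (Finset.range (M p)).image (f p))).card
          ≤ ∑ p ∈ s, M p := by
        apply le_trans Finset.card_biUnion_le
        apply Finset.sum_le_sum
        intro p _
        exact le_trans Finset.card_image_le (le_of_eq (Finset.card_range _))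
      have h2 : ((∑ p ∈ s, M p : ℕ) : ℝ) ≤ b * 1 + ∑ j ∈ Finset.range (n+1), β ^ j := by
        push_cast
        calc ∑ p ∈ s, ((M p : ℕ) : ℝ) ≤ ∑ p ∈ s, (b * (p.2 - p.1) + 1) :=
              Finset.sum_le_sum (fun p hp => (hMcast p hp).2)
          _ = b * (∑ p ∈ s, (p.2 - p.1)) + s.card := by
              rw [Finset.sum_add_distrib, Finset.mul_sum, Finset.sum_const]
              simp
          _ ≤ b * 1 + ∑ j ∈ Finset.range (n+1), β ^ j := by
              have hb' : 0 ≤ b := hb0.le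
              nlinarith [hsum, hcard]
      calc ((s.biUnion (fun p => (Finset.range (M p)).image (f p))).card : ℝ)
          ≤ ((∑ p ∈ s, M p : ℕ) : ℝ) := by exact_mod_cast h1
        _ ≤ b * 1 + ∑ j ∈ Finset.range (n+1), β ^ j := h2
        _ = ∑ j ∈ Finset.range (n+2), β ^ j := by
            conv_rhs => rw [Finset.sum_range_succ]
            rw [hbdef]; ring

lemma volume_close_le (β : ℝ) (hβ : 1 < β) {n : ℕ} (hn : 1 ≤ n) {ε : ℝ} (hε : 0 < ε) :
    volume {x | x ∈ Ico (0:ℝ) 1 ∧ |(Tbeta β)^[n] x - x| < ε} ≤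
      ENNReal.ofReal ((∑ j ∈ Finset.range (n+1), β ^ j) * (2 * ε / (β ^ n - 1))) := by
  obtain ⟨s, hcov, hle, hsum, hcard⟩ := Tbeta_branches β hβ n
  have hd : (0:ℝ) < β ^ n - 1 := by
    have : (1:ℝ) < β ^ n := one_lt_pow₀ hβ (by omega)
    linarith
  have hincl : {x | x ∈ Ico (0:ℝ) 1 ∧ |(Tbeta β)^[n] x - x| < ε} ⊆
      ⋃ p ∈ s, Ioo ((β ^ n * p.1 - ε)/(β ^ n - 1)) ((β ^ n * p.1 + ε)/(β ^ n - 1)) := by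
    intro x ⟨hx, habs⟩
    obtain ⟨p, hp, hxp, hform⟩ := hcov x hx
    rw [hform x hxp] at habs
    rw [abs_lt] at habs
    obtain ⟨h1, h2⟩ := habs
    apply mem_iUnion₂.mpr
    refine ⟨p, hp, ?_, ?_⟩
    · rw [div_lt_iff₀ hd]; nlinarith
    · rw [lt_div_iff₀ hd]; nlinarith
  calc volume {x | x ∈ Ico (0:ℝ) 1 ∧ |(Tbeta β)^[n] x - x| < ε}
      ≤ volume (⋃ p ∈ s, Ioo ((β ^ n * p.1 - ε)/(β ^ n - 1)) ((β ^ n * p.1 + ε)/(β ^ n - 1))) :=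
        measure_mono hincl
    _ ≤ ∑ p ∈ s, volume (Ioo ((β ^ n * p.1 - ε)/(β ^ n - 1)) ((β ^ n * p.1 + ε)/(β ^ n - 1))) :=
        measure_biUnion_finset_le s _
    _ = ∑ p ∈ s, ENNReal.ofReal (2 * ε / (β ^ n - 1)) := by
        apply Finset.sum_congr rfl
        intro p _
        rw [Real.volume_Ioo]
        congr 1
        field_simp
        ring
    _ = (s.card : ℝ≥0∞) * ENNReal.ofReal (2 * ε / (β ^ n - 1)) := by
        rw [Finset.sum_const, nsmul_eq_mul]
    _ = ENNReal.ofReal ((s.card : ℝ) * (2 * ε / (β ^ n - 1))) := by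
        rw [ENNReal.ofReal_mul (Nat.cast_nonneg _), ENNReal.ofReal_natCast]
    _ ≤ ENNReal.ofReal ((∑ j ∈ Finset.range (n+1), β ^ j) * (2 * ε / (β ^ n - 1))) := by
        apply ENNReal.ofReal_le_ofReal
        apply mul_le_mul_of_nonneg_right hcard
        positivity

lemma volume_fixed (β : ℝ) (hβ : 1 < β) {n : ℕ} (hn : 1 ≤ n) :
    volume {x | x ∈ Ico (0:ℝ) 1 ∧ (Tbeta β)^[n] x = x} = 0 := by
  obtain ⟨s, hcov, hle, hsum, hcard⟩ := Tbeta_branches β hβ n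
  have hd : (0:ℝ) < β ^ n - 1 := by
    have : (1:ℝ) < β ^ n := one_lt_pow₀ hβ (by omega)
    linarith
  have hincl : {x | x ∈ Ico (0:ℝ) 1 ∧ (Tbeta β)^[n] x = x} ⊆
      ⋃ p ∈ s, {(β ^ n * p.1) / (β ^ n - 1)} := by
    intro x ⟨hx, hfix⟩
    obtain ⟨p, hp, hxp, hform⟩ := hcov x hx
    rw [hform x hxp] at hfix
    apply mem_iUnion₂.mpr
    refine ⟨p, hp, ?_⟩
    rw [mem_singleton_iff, eq_div_iff hd.ne']
    nlinarith
  apply le_antisymm _ zero_le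
  calc volume {x | x ∈ Ico (0:ℝ) 1 ∧ (Tbeta β)^[n] x = x}
      ≤ volume (⋃ p ∈ s, {(β ^ n * p.1) / (β ^ n - 1)}) := measure_mono hincl
    _ ≤ ∑ p ∈ s, volume ({(β ^ n * p.1) / (β ^ n - 1)} : Set ℝ) :=
        measure_biUnion_finset_le s _
    _ = 0 := by simp

lemma rpow_neg_mul_nat (β : ℝ) (hβ0 : 0 < β) (r : ℝ) (n : ℕ) :
    β ^ (-(r * (n:ℝ))) = (β ^ (-r)) ^ n := by
  have h1 : -(r * (n:ℝ)) = (-r) * (n:ℝ) := by ring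
  rw [h1, Real.rpow_mul hβ0.le, Real.rpow_natCast]

lemma volume_freq (β : ℝ) (hβ : 1 < β) {r : ℝ} (hr : 0 < r) :
    volume {x | x ∈ Ico (0:ℝ) 1 ∧
      ∃ᶠ n : ℕ in atTop, |(Tbeta β)^[n] x - x| < β ^ (-(r * (n:ℝ)))} = 0 := by
  have hβ0 : (0:ℝ) < β := lt_trans one_pos hβ
  set w : ℝ := β ^ (-r) with hwdef
  have hw0 : 0 < w := Real.rpow_pos_of_pos hβ0 _
  have hw1 : w < 1 := Real.rpow_lt_one_of_one_lt_of_neg hβ (by linarith)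
  set W : ℝ≥0∞ := ENNReal.ofReal w with hWdef
  have hW0 : W ≠ 0 := by
    rw [hWdef]; simp [ENNReal.ofReal_eq_zero, not_le, hw0]
  have hWtop : W ≠ ⊤ := ENNReal.ofReal_ne_top
  have hW1 : W < 1 := by rw [hWdef]; exact ENNReal.ofReal_lt_one.mpr hw1
  have hset : {x | x ∈ Ico (0:ℝ) 1 ∧
      ∃ᶠ n : ℕ in atTop, |(Tbeta β)^[n] x - x| < β ^ (-(r * (n:ℝ)))}
      = {x : ℝ | ∃ᶠ n : ℕ in atTop,
          x ∈ Ico (0:ℝ) 1 ∧ |(Tbeta β)^[n] x - x| < β ^ (-(r * (n:ℝ)))} := by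
    ext x
    simp only [mem_setOf_eq]
    rw [Filter.frequently_and_distrib_left]
  rw [hset]
  apply measure_setOf_frequently_eq_zero
  -- summability
  obtain ⟨n₀, hn₀⟩ := pow_unbounded_of_one_lt (2:ℝ) hβ
  set m : ℕ := max n₀ 1 with hmdef
  set K : ℝ := β / (β - 1) * 4 with hKdef
  have hK0 : 0 ≤ K := by
    rw [hKdef]
    have : 0 < β - 1 := by linarith
    positivity
  set C : ℝ≥0∞ := ENNReal.ofReal K + (W⁻¹) ^ m with hCdef
  have hCtop : C ≠ ⊤ := by
    rw [hCdef]
    exact ENNReal.add_ne_top.mpr ⟨ENNReal.ofReal_ne_top,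
      ENNReal.pow_ne_top (ENNReal.inv_ne_top.mpr hW0)⟩
  have hclaim : ∀ n : ℕ,
      volume {x | x ∈ Ico (0:ℝ) 1 ∧ |(Tbeta β)^[n] x - x| < β ^ (-(r * (n:ℝ)))}
        ≤ C * W ^ n := by
    intro n
    by_cases hnm : m ≤ n
    · have hn1 : 1 ≤ n := le_trans (le_max_right n₀ 1) hnm
      have hpow2 : (2:ℝ) ≤ β ^ n := by
        calc (2:ℝ) ≤ β ^ n₀ := hn₀.le
          _ ≤ β ^ n := pow_le_pow_right₀ hβ.le (le_trans (le_max_left n₀ 1) hnm)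
      have hd : (0:ℝ) < β ^ n - 1 := by linarith
      have hε : (0:ℝ) < β ^ (-(r * (n:ℝ))) := Real.rpow_pos_of_pos hβ0 _
      have h1 := volume_close_le β hβ hn1 hε
      have hreal : (∑ j ∈ Finset.range (n+1), β ^ j) * (2 * β ^ (-(r * (n:ℝ))) / (β ^ n - 1))
          ≤ K * w ^ n := by
        have hb1 : (0:ℝ) < β - 1 := by linarith
        have hgs : ∑ j ∈ Finset.range (n+1), β ^ j = (β ^ (n+1) - 1)/(β - 1) :=
          geom_sum_eq (ne_of_gt hβ) (n+1)
        have hS : (∑ j ∈ Finset.range (n+1), β ^ j) ≤ β ^ (n+1) / (β - 1) := by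
          rw [hgs]; gcongr; linarith
        have hS0 : (0:ℝ) ≤ ∑ j ∈ Finset.range (n+1), β ^ j := by positivity
        have hfrac : 2 * β ^ (-(r * (n:ℝ))) / (β ^ n - 1) ≤ 4 * β ^ (-(r * (n:ℝ))) / β ^ n := by
          rw [div_le_div_iff₀ hd (by positivity)]
          nlinarith
        have hfrac0 : (0:ℝ) ≤ 2 * β ^ (-(r * (n:ℝ))) / (β ^ n - 1) := by positivity
        calc (∑ j ∈ Finset.range (n+1), β ^ j) * (2 * β ^ (-(r * (n:ℝ))) / (β ^ n - 1))
            ≤ (β ^ (n+1) / (β - 1)) * (4 * β ^ (-(r * (n:ℝ))) / β ^ n) := by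
              apply mul_le_mul hS hfrac hfrac0 (by positivity)
          _ = K * β ^ (-(r * (n:ℝ))) := by
              rw [hKdef, pow_succ]
              field_simp
          _ = K * w ^ n := by rw [rpow_neg_mul_nat β hβ0 r n, hwdef]
      calc volume {x | x ∈ Ico (0:ℝ) 1 ∧ |(Tbeta β)^[n] x - x| < β ^ (-(r * (n:ℝ)))}
          ≤ ENNReal.ofReal ((∑ j ∈ Finset.range (n+1), β ^ j) *
              (2 * β ^ (-(r * (n:ℝ))) / (β ^ n - 1))) := h1
        _ ≤ ENNReal.ofReal (K * w ^ n) := ENNReal.ofReal_le_ofReal hreal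
        _ = ENNReal.ofReal K * W ^ n := by
            rw [ENNReal.ofReal_mul hK0, hWdef, ENNReal.ofReal_pow hw0.le]
        _ ≤ C * W ^ n := by
            apply mul_le_mul_left
            rw [hCdef]
            exact le_self_add
    · push_neg at hnm
      have hv1 : volume {x | x ∈ Ico (0:ℝ) 1 ∧ |(Tbeta β)^[n] x - x| < β ^ (-(r * (n:ℝ)))}
          ≤ 1 := by
        calc volume {x | x ∈ Ico (0:ℝ) 1 ∧ _} ≤ volume (Ico (0:ℝ) 1) :=
              measure_mono (fun x hx => hx.1)
          _ = 1 := by rw [Real.volume_Ico]; norm_num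
      have hone : (1:ℝ≥0∞) ≤ C * W ^ n := by
        have h2 : (W⁻¹) ^ m * W ^ m = 1 := by
          rw [← mul_pow, ENNReal.inv_mul_cancel hW0 hWtop, one_pow]
        have h3 : W ^ m ≤ W ^ n := pow_le_pow_right_of_le_one' hW1.le hnm.le
        calc (1:ℝ≥0∞) = (W⁻¹) ^ m * W ^ m := h2.symm
          _ ≤ (W⁻¹) ^ m * W ^ n := mul_le_mul_right h3 _
          _ ≤ C * W ^ n := by
              apply mul_le_mul_left
              rw [hCdef]
              exact le_add_self
      exact le_trans hv1 hone
  apply ne_top_of_le_ne_top _ (ENNReal.tsum_le_tsum hclaim)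
  rw [ENNReal.tsum_mul_left, ENNReal.tsum_geometric]
  apply ENNReal.mul_ne_top hCtop
  apply ENNReal.inv_ne_top.mpr
  simp only [ne_eq, tsub_eq_zero_iff_le, not_le]
  exact hW1

theorem full_measure_rHat_zero (β : ℝ) (hβ : 1 < β) :
    volume {x ∈ Set.Ico (0 : ℝ) 1 | rHatBeta β x ≠ 0} = 0 := by
  have hβ0 : (0:ℝ) < β := lt_trans one_pos hβ
  have hincl : {x ∈ Set.Ico (0 : ℝ) 1 | rHatBeta β x ≠ 0} ⊆
      (⋃ j : ℕ, {x | x ∈ Ico (0:ℝ) 1 ∧ (Tbeta β)^[j+1] x = x}) ∪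
      (⋃ k : ℕ, {x | x ∈ Ico (0:ℝ) 1 ∧ ∃ᶠ n : ℕ in atTop,
        |(Tbeta β)^[n] x - x| < β ^ (-((1/((k:ℝ)+1)) * (n:ℝ)))}) := by
    rintro x ⟨hx, hne⟩
    have hex : ∃ r : ℝ, (0 ≤ r ∧ ∀ᶠ N : ℕ in atTop, ∃ n : ℕ, 1 ≤ n ∧ n ≤ N ∧
        |(Tbeta β)^[n] x - x| < β ^ (-(r * (N : ℝ)))) ∧ 0 < r := by
      by_contra hc
      push_neg at hc
      apply hne
      rw [rHatBeta]
      refine le_antisymm ?_ zero_le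
      refine iSup₂_le ?_
      intro r hr
      exact (ENNReal.ofReal_eq_zero.mpr (hc r hr)).le
    obtain ⟨r, ⟨hr0, hev⟩, hrpos⟩ := hex
    by_cases hper : ∃ j : ℕ, (Tbeta β)^[j+1] x = x
    · left
      obtain ⟨j, hj⟩ := hper
      exact mem_iUnion.mpr ⟨j, hx, hj⟩
    · right
      push_neg at hper
      obtain ⟨k, hk⟩ := exists_nat_gt (1/r)
      set q : ℝ := 1/((k:ℝ)+1) with hqdef
      have hk1 : (0:ℝ) < (k:ℝ)+1 := by positivity
      have hq0 : 0 < q := by rw [hqdef]; positivity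
      have hqr : q ≤ r := by
        rw [hqdef, div_le_iff₀ hk1]
        rw [div_lt_iff₀ hrpos] at hk
        nlinarith
      apply mem_iUnion.mpr
      refine ⟨k, hx, ?_⟩
      rw [frequently_atTop]
      intro a
      set M : ℕ := a + 1 with hMdef
      set im : Finset ℝ := (Finset.Icc 1 M).image (fun j => |(Tbeta β)^[j] x - x|)
        with himdef
      have hne' : im.Nonempty := by
        apply Finset.Nonempty.image
        exact Finset.nonempty_Icc.mpr (by omega)
      set δ : ℝ := im.min' hne' with hδdef
      have hδpos : 0 < δ := by
        have hmem := Finset.min'_mem im hne'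
        obtain ⟨j, hj, hjδ⟩ := Finset.mem_image.mp hmem
        rw [Finset.mem_Icc] at hj
        obtain ⟨j', rfl⟩ : ∃ j', j = j' + 1 := ⟨j - 1, by omega⟩
        show 0 < im.min' hne'
        rw [← hjδ]
        exact abs_pos.mpr (sub_ne_zero.mpr (hper j'))
      -- eventual smallness
      have hw0 : (0:ℝ) < β ^ (-q) := Real.rpow_pos_of_pos hβ0 _
      have hw1 : β ^ (-q) < 1 := Real.rpow_lt_one_of_one_lt_of_neg hβ (by linarith)
      have htend : Tendsto (fun N : ℕ => (β ^ (-q) : ℝ) ^ N) atTop (nhds 0) :=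
        tendsto_pow_atTop_nhds_zero_of_lt_one hw0.le hw1
      have hsmall : ∀ᶠ N : ℕ in atTop, (β ^ (-q) : ℝ) ^ N < δ :=
        htend.eventually_lt_const hδpos
      obtain ⟨N, hevN, hsmallN⟩ := (hev.and hsmall).exists
      obtain ⟨n, hn1, hnN, hlt⟩ := hevN
      have hmono1 : β ^ (-(r * (N:ℝ))) ≤ β ^ (-(q * (N:ℝ))) := by
        apply Real.rpow_le_rpow_of_exponent_le hβ.le
        have : q * (N:ℝ) ≤ r * (N:ℝ) :=
          mul_le_mul_of_nonneg_right hqr (Nat.cast_nonneg N)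
        linarith
      have heqw : β ^ (-(q * (N:ℝ))) = (β ^ (-q) : ℝ) ^ N := rpow_neg_mul_nat β hβ0 q N
      have hltδ : |(Tbeta β)^[n] x - x| < δ := by
        calc |(Tbeta β)^[n] x - x| < β ^ (-(r * (N:ℝ))) := hlt
          _ ≤ β ^ (-(q * (N:ℝ))) := hmono1
          _ = (β ^ (-q) : ℝ) ^ N := heqw
          _ < δ := hsmallN
      have hnM : M < n := by
        by_contra hcon
        push_neg at hcon
        have hmem : |(Tbeta β)^[n] x - x| ∈ im := by
          rw [himdef]
          exact Finset.mem_image.mpr ⟨n, Finset.mem_Icc.mpr ⟨hn1, hcon⟩, rfl⟩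
        have := Finset.min'_le im _ hmem
        rw [← hδdef] at this
        linarith
      refine ⟨n, by omega, ?_⟩
      calc |(Tbeta β)^[n] x - x| < β ^ (-(r * (N:ℝ))) := hlt
        _ ≤ β ^ (-(q * (N:ℝ))) := hmono1
        _ ≤ β ^ (-(q * (n:ℝ))) := by
            apply Real.rpow_le_rpow_of_exponent_le hβ.le
            have h1 : (n:ℝ) ≤ (N:ℝ) := Nat.cast_le.mpr hnN
            nlinarith
        _ = β ^ (-(1/((k:ℝ)+1) * (n:ℝ))) := by rw [hqdef]
  apply measure_mono_null hincl
  apply measure_union_null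
  · exact measure_iUnion_null (fun j => volume_fixed β hβ (by omega))
  · refine measure_iUnion_null (fun k => volume_freq β hβ ?_)
    positivity
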